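/- Let M ∈ ℝ^(n×n) be a p-kernel over 𝒜_n^F with rank M = d, and let K ∈ ℝ^(n×d), H ∈ ℝ^(d×n) satisfy range K = (ker M)ᗮ and ker H = (range M)ᗮ. Then the generalized primal-dual resolvent with representation (p, M, MK, HMK, HM) satisfies the conditions: (i) M is a p-kernel; (ii) ker[MK | −M] ⊇ ker[HMK | −HM]; (iii) range(HMK) ⊇ range(HM). Furthermore, such K and H exist for every p-kernel M (e.g., take the columns of K to be d linearly independent rows of M and the rows of H to be d linearly independent columns of M). -/

import Mathlib

open Matrix

/-- `Γ_p = R_p - R_pᵀ`, where `R_p` has ones in row `p` and zeros elsewhere. -/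
def GammaMat (n : ℕ) (p : Fin n) : Matrix (Fin n) (Fin n) ℝ :=
  Matrix.of fun i j => (if i = p then (1 : ℝ) else 0) - (if j = p then (1 : ℝ) else 0)

/-- `M` is a `p`-kernel over `𝒜ₙ^F`. -/
def IsPKernel {n : ℕ} (F : Finset (Fin n)) (p : Fin n)
    (M : Matrix (Fin n) (Fin n) ℝ) : Prop :=
  p ∉ F ∧ (∀ i j : Fin n, i < j → (M + GammaMat n p) i j = 0) ∧
    (∀ i, 0 ≤ (M + GammaMat n p) i i) ∧ ∀ i, ((M + GammaMat n p) i i = 0 ↔ i ∈ F)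

lemma teuc_apply {m n : ℕ} (A : Matrix (Fin m) (Fin n) ℝ) (v : EuclideanSpace ℝ (Fin n)) :
    Matrix.toEuclideanLin A v = A.mulVec v := rfl

/-- `ker A = (range Aᵀ)ᗮ` for real matrices. -/
lemma ker_eq_orth_range_transpose {m n : ℕ} (A : Matrix (Fin m) (Fin n) ℝ) :
    LinearMap.ker (Matrix.toEuclideanLin A) = (LinearMap.range (Matrix.toEuclideanLin Aᵀ))ᗮ := by
  have hadj : Matrix.toEuclideanLin Aᵀ = LinearMap.adjoint (Matrix.toEuclideanLin A) := by
    rw [← Matrix.conjTranspose_eq_transpose_of_trivial]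
    exact Matrix.toEuclideanLin_conjTranspose_eq_adjoint A
  ext x
  simp only [LinearMap.mem_ker, Submodule.mem_orthogonal]
  constructor
  · rintro h u ⟨v, rfl⟩
    rw [hadj, LinearMap.adjoint_inner_left, h, inner_zero_right]
  · intro h
    have := h (Matrix.toEuclideanLin Aᵀ (Matrix.toEuclideanLin A x))
      ⟨Matrix.toEuclideanLin A x, rfl⟩
    rw [hadj, LinearMap.adjoint_inner_left] at this
    exact inner_self_eq_zero.mp this

/-- Any `d`-dimensional subspace of `ℝⁿ` is the range of an `n × d` matrix. -/
lemma exists_range_eq {n d : ℕ} (W : Submodule ℝ (EuclideanSpace ℝ (Fin n)))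
    (hW : Module.finrank ℝ W = d) :
    ∃ A : Matrix (Fin n) (Fin d) ℝ, LinearMap.range (Matrix.toEuclideanLin A) = W := by
  have b : Module.Basis (Fin d) ℝ W := Module.finBasisOfFinrankEq ℝ W hW
  refine ⟨Matrix.of fun i j => ((b j : EuclideanSpace ℝ (Fin n)) i), ?_⟩
  have key : ∀ z : EuclideanSpace ℝ (Fin d),
      Matrix.toEuclideanLin (Matrix.of fun i j => ((b j : EuclideanSpace ℝ (Fin n)) i)) z =
        ((∑ j, z j • b j : W) : EuclideanSpace ℝ (Fin n)) := by
    intro z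
    ext i
    rw [teuc_apply]
    simp only [Matrix.mulVec, dotProduct, Matrix.of_apply]
    rw [show ((∑ j, z j • b j : W) : EuclideanSpace ℝ (Fin n)) i
        = ∑ j, z j * ((b j : EuclideanSpace ℝ (Fin n)) i) by
      push_cast
      rw [WithLp.ofLp_sum, Finset.sum_apply]
      simp [PiLp.smul_apply]]
    exact Finset.sum_congr rfl fun j _ => mul_comm _ _
  ext x
  simp only [LinearMap.mem_range]
  constructor
  · rintro ⟨z, rfl⟩
    rw [key]
    exact Submodule.coe_mem _
  · intro hx
    refine ⟨WithLp.toLp 2 (fun j => b.repr ⟨x, hx⟩ j), ?_⟩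
    rw [key]
    simp only [WithLp.ofLp_toLp]
    have : (∑ j, b.repr ⟨x, hx⟩ j • b j : W) = ⟨x, hx⟩ := by
      conv_rhs => rw [← b.sum_repr ⟨x, hx⟩]
    rw [this]

/-- If `M` is a `p`-kernel with `rank M = d` and `K`, `Hm` satisfy
`range K = (ker M)ᗮ`, `ker Hm = (range M)ᗮ`, then the representation
`(p, M, M K, Hm M K, Hm M)` satisfies `ker [MK | −M] ⊇ ker [HmMK | −HmM]` and
`range (Hm M K) ⊇ range (Hm M)`; moreover such `K`, `Hm` always exist. -/
theorem stmt9 {n d : ℕ} (F : Finset (Fin n)) (p : Fin n)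
    (M : Matrix (Fin n) (Fin n) ℝ) (hM : IsPKernel F p M) (hrank : M.rank = d) :
    (∀ (K : Matrix (Fin n) (Fin d) ℝ) (Hm : Matrix (Fin d) (Fin n) ℝ),
      LinearMap.range (Matrix.toEuclideanLin K) = (LinearMap.ker (Matrix.toEuclideanLin M))ᗮ →
      LinearMap.ker (Matrix.toEuclideanLin Hm) = (LinearMap.range (Matrix.toEuclideanLin M))ᗮ →
      ((∀ (z : Fin d → ℝ) (y : Fin n → ℝ),
          (Hm * M * K).mulVec z = (Hm * M).mulVec y → (M * K).mulVec z = M.mulVec y) ∧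
        (∀ y : Fin n → ℝ, ∃ z : Fin d → ℝ,
          (Hm * M * K).mulVec z = (Hm * M).mulVec y))) ∧
    (∃ (K : Matrix (Fin n) (Fin d) ℝ) (Hm : Matrix (Fin d) (Fin n) ℝ),
      LinearMap.range (Matrix.toEuclideanLin K) = (LinearMap.ker (Matrix.toEuclideanLin M))ᗮ ∧
      LinearMap.ker (Matrix.toEuclideanLin Hm) = (LinearMap.range (Matrix.toEuclideanLin M))ᗮ) := by
  constructor
  · intro K Hm hK hH
    constructor
    · -- part (ii) of the kernel condition
      intro z y h
      set w : EuclideanSpace ℝ (Fin n) := WithLp.toLp 2 ((M * K).mulVec z - M.mulVec y) with hw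
      have hwker : w ∈ LinearMap.ker (Matrix.toEuclideanLin Hm) := by
        rw [LinearMap.mem_ker, hw, Matrix.toEuclideanLin_apply_piLp_toLp]
        have : Hm.mulVec ((M * K).mulVec z - M.mulVec y)
            = (Hm * M * K).mulVec z - (Hm * M).mulVec y := by
          simp [Matrix.mulVec_sub, ← Matrix.mulVec_mulVec]
        rw [this, h, sub_self, WithLp.toLp_zero]
      have hwrange : w ∈ LinearMap.range (Matrix.toEuclideanLin M) := by
        have h1 : (WithLp.toLp 2 ((M * K).mulVec z) : EuclideanSpace ℝ (Fin n))
            ∈ LinearMap.range (Matrix.toEuclideanLin M) :=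
          ⟨WithLp.toLp 2 (K.mulVec z), by
            rw [Matrix.toEuclideanLin_apply_piLp_toLp, ← Matrix.mulVec_mulVec]⟩
        have h2 : (WithLp.toLp 2 (M.mulVec y) : EuclideanSpace ℝ (Fin n))
            ∈ LinearMap.range (Matrix.toEuclideanLin M) := ⟨WithLp.toLp 2 y, rfl⟩
        rw [hw, WithLp.toLp_sub]
        exact Submodule.sub_mem _ h1 h2
      rw [hH] at hwker
      have : w = 0 := by
        have hd := Submodule.orthogonal_disjoint (LinearMap.range (Matrix.toEuclideanLin M))
        exact Submodule.disjoint_def.mp hd w hwrange hwker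
      have := sub_eq_zero.mp (show (M * K).mulVec z - M.mulVec y = 0 from congrArg WithLp.ofLp this)
      exact this
    · -- part (iii): surjectivity condition
      intro y
      obtain ⟨a, ha, c, hc, hy⟩ :=
        (LinearMap.ker (Matrix.toEuclideanLin M))ᗮ.exists_add_mem_mem_orthogonal
          (WithLp.toLp 2 y : EuclideanSpace ℝ (Fin n))
      rw [Submodule.orthogonal_orthogonal] at hc
      rw [← hK] at ha
      obtain ⟨z, hz⟩ := ha
      refine ⟨WithLp.ofLp z, ?_⟩
      have hMc : M.mulVec (WithLp.ofLp c) = 0 := congrArg WithLp.ofLp (LinearMap.mem_ker.mp hc)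
      have hKz : K.mulVec (WithLp.ofLp z) = WithLp.ofLp a := congrArg WithLp.ofLp hz
      have hMy : M.mulVec (K.mulVec (WithLp.ofLp z)) = M.mulVec y := by
        rw [hKz, show y = WithLp.ofLp a + WithLp.ofLp c from congrArg WithLp.ofLp hy, Matrix.mulVec_add, hMc,
          add_zero]
      rw [← Matrix.mulVec_mulVec, ← Matrix.mulVec_mulVec, ← Matrix.mulVec_mulVec, hMy]
  · -- existence of K and Hm
    have hrange : Module.finrank ℝ (LinearMap.range (Matrix.toEuclideanLin M)) = d := by
      rw [← hrank, Matrix.toEuclideanLin_eq_toLin]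
      exact (M.rank_eq_finrank_range_toLin _ _).symm
    have hker : Module.finrank ℝ ((LinearMap.ker (Matrix.toEuclideanLin M))ᗮ) = d := by
      have h1 := (LinearMap.ker (Matrix.toEuclideanLin M)).finrank_add_finrank_orthogonal
      have h2 := LinearMap.finrank_range_add_finrank_ker (Matrix.toEuclideanLin M)
      omega
    obtain ⟨K, hK⟩ := exists_range_eq _ hker
    obtain ⟨A, hA⟩ := exists_range_eq _ hrange
    refine ⟨K, Aᵀ, hK, ?_⟩
    rw [ker_eq_orth_range_transpose, Matrix.transpose_transpose, hA]
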